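/- With the notation below, 1/γ ≤ (1/2)·Σ_{i≠j} 1/φ(i,j) + max_{1≤i≤m} (1/γ_i)·(1 + Σ_{j≠i} κ_i/φ(i,j)); equivalently, 1/γ ≤ ((1/2)·Σ_{i≠j} 1/φ(i,j))·(1 + [max_i (1/γ_i)·(1 + Σ_{j≠i} κ_i/φ(i,j))]/((1/2)·Σ_{i≠j} 1/φ(i,j))). -/

import Mathlib

open Finset

noncomputable section

/-- Irreducibility of a finite nonnegative matrix: any state reaches any other. -/
def Irred {n : Type*} [Fintype n] [DecidableEq n] (P : Matrix n n ℝ) : Prop :=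
  ∀ x y, ∃ k : ℕ, 0 < (P ^ k) x y

/-- The restricted ensemble `μ_R(x) = μ(x)/μ(R)` (as a function on all of `X`). -/
def muR {X : Type*} [Fintype X] (μ : X → ℝ) (R : Finset X) (x : X) : ℝ :=
  μ x / ∑ y ∈ R, μ y

/-- Escape probability `e_R(x) = Σ_{y∉R} p(x,y)`. -/
def escR {X : Type*} [Fintype X] [DecidableEq X] (p : Matrix X X ℝ) (R : Finset X)
    (x : X) : ℝ := ∑ y ∈ Rᶜ, p x y

/-- The reflected kernel `p_R` on `R`. -/
def pRefl {X : Type*} [Fintype X] [DecidableEq X] (p : Matrix X X ℝ) (R : Finset X) :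
    Matrix R R ℝ :=
  fun x y => if (x : X) = (y : X) then p x x + escR p R x else p x y

/-- The sub-Markovian killed kernel `p_R^*` on `R`. -/
def pKill {X : Type*} [Fintype X] (p : Matrix X X ℝ) (R : Finset X) : Matrix R R ℝ :=
  fun x y => p x y

/-- Mean of `f` with respect to the weight `μ` on a finite type. -/
def meanOf {n : Type*} [Fintype n] (μ : n → ℝ) (f : n → ℝ) : ℝ := ∑ x, μ x * f x

/-- Scalar product `⟨f,g⟩` with respect to the weight `μ` on a finite type. -/
def innOf {n : Type*} [Fintype n] (μ : n → ℝ) (f g : n → ℝ) : ℝ := ∑ x, μ x * f x * g x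

/-- Variance of `f` with respect to the weight `μ` on a finite type. -/
def varOf {n : Type*} [Fintype n] (μ : n → ℝ) (f : n → ℝ) : ℝ :=
  ∑ x, μ x * (f x - meanOf μ f) ^ 2

/-- Dirichlet form of the kernel `P` reversible w.r.t. `μ`. -/
def dirOf {n : Type*} [Fintype n] (P : Matrix n n ℝ) (μ : n → ℝ) (f : n → ℝ) : ℝ :=
  (1 / 2) * ∑ x, ∑ y, μ x * P x y * (f x - f y) ^ 2

/-- Spectral gap of the kernel `P` reversible w.r.t. `μ`:
`min { D(f)/Var_μ(f) : Var_μ(f) ≠ 0 }`. -/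
def gapOf {n : Type*} [Fintype n] (P : Matrix n n ℝ) (μ : n → ℝ) : ℝ :=
  sInf {r : ℝ | ∃ f : n → ℝ, varOf μ f ≠ 0 ∧ r = dirOf P μ f / varOf μ f}

/-- Spectral gap `γ_R` of the reflected process on `R`. -/
def gapR {X : Type*} [Fintype X] [DecidableEq X] (p : Matrix X X ℝ) (μ : X → ℝ)
    (R : Finset X) : ℝ :=
  gapOf (pRefl p R) (fun x : R => muR μ R x)

/-- `(κ,∞)`-capacity `C_κ(R, X∖R)` (Dirichlet principle). -/
def capK {X : Type*} [Fintype X] [DecidableEq X] (p : Matrix X X ℝ) (μ : X → ℝ)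
    (R : Finset X) (κ : ℝ) : ℝ :=
  sInf {r : ℝ | ∃ f : X → ℝ, (∀ x ∉ R, f x = 0) ∧
    r = dirOf p μ f + κ * ∑ a ∈ R, μ a * (f a - 1) ^ 2}

/-- `(∞,λ)`-capacity `C^λ(R, X∖R)` (Dirichlet principle). -/
def capL {X : Type*} [Fintype X] [DecidableEq X] (p : Matrix X X ℝ) (μ : X → ℝ)
    (R : Finset X) (l : ℝ) : ℝ :=
  sInf {r : ℝ | ∃ f : X → ℝ, (∀ x ∈ R, f x = 1) ∧
    r = dirOf p μ f + l * ∑ b ∈ Rᶜ, μ b * f b ^ 2}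

/-- `(κ,λ)`-capacity `C_κ^λ(A, B)` (Dirichlet principle). -/
def capKL {X : Type*} [Fintype X] [DecidableEq X] (p : Matrix X X ℝ) (μ : X → ℝ)
    (A B : Finset X) (κ l : ℝ) : ℝ :=
  sInf {r : ℝ | ∃ f : X → ℝ,
    r = dirOf p μ f + κ * ∑ a ∈ A, μ a * (f a - 1) ^ 2 + l * ∑ b ∈ B, μ b * f b ^ 2}

section Aux

variable {n : Type*} [Fintype n]

lemma dirOf_nonneg (P : Matrix n n ℝ) (ν : n → ℝ) (hP : ∀ x y, 0 ≤ P x y)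
    (hν : ∀ x, 0 ≤ ν x) (f : n → ℝ) : 0 ≤ dirOf P ν f := by
  unfold dirOf
  have h : (0:ℝ) ≤ ∑ x, ∑ y, ν x * P x y * (f x - f y) ^ 2 := by
    apply Finset.sum_nonneg; intro x _
    apply Finset.sum_nonneg; intro y _
    exact mul_nonneg (mul_nonneg (hν x) (hP x y)) (sq_nonneg _)
  linarith

lemma varOf_nonneg (ν : n → ℝ) (hν : ∀ x, 0 ≤ ν x) (f : n → ℝ) : 0 ≤ varOf ν f :=
  Finset.sum_nonneg fun x _ => mul_nonneg (hν x) (sq_nonneg _)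

lemma var_pair (ν : n → ℝ) (hν : ∑ x, ν x = 1) (f : n → ℝ) :
    varOf ν f = (1/2) * ∑ x, ∑ y, ν x * ν y * (f x - f y)^2 := by
  have hl : varOf ν f = (∑ x, ν x * f x ^ 2) - (∑ x, ν x * f x)^2 := by
    unfold varOf meanOf
    have h : ∀ x ∈ Finset.univ, ν x * (f x - ∑ z, ν z * f z)^2
        = ν x * f x^2 - (2*(∑ z, ν z * f z)) * (ν x * f x) + (∑ z, ν z * f z)^2 * ν x :=
      fun x _ => by ring
    rw [Finset.sum_congr rfl h, Finset.sum_add_distrib, Finset.sum_sub_distrib,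
      ← Finset.mul_sum, ← Finset.mul_sum, hν]
    ring
  have hr : ∑ x, ∑ y, ν x * ν y * (f x - f y)^2
      = 2*((∑ x, ν x * f x ^ 2) - (∑ x, ν x * f x)^2) := by
    have h : ∀ x ∈ Finset.univ, ∑ y, ν x * ν y * (f x - f y)^2
        = ν x * f x^2 * (∑ y, ν y) + ν x * (∑ y, ν y * f y^2)
          - (ν x * f x) * (2 * ∑ y, ν y * f y) := by
      intro x _
      have h2 : ∀ y ∈ Finset.univ, ν x * ν y * (f x - f y)^2
          = ν x * f x^2 * ν y + ν x * (ν y * f y^2) - (ν x * f x) * (2 * (ν y * f y)) :=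
        fun y _ => by ring
      rw [Finset.sum_congr rfl h2, Finset.sum_sub_distrib, Finset.sum_add_distrib,
        ← Finset.mul_sum, ← Finset.mul_sum, ← Finset.mul_sum, ← Finset.mul_sum]
    rw [Finset.sum_congr rfl h, Finset.sum_sub_distrib, Finset.sum_add_distrib, hν,
      ← Finset.sum_mul, ← Finset.sum_mul, ← Finset.sum_mul, hν]
    ring
  rw [hl, hr]; ring

lemma dirOf_affine (P : Matrix n n ℝ) (ν : n → ℝ) (f : n → ℝ) (c t : ℝ) :
    dirOf P ν (fun x => (f x - c) * t) = t^2 * dirOf P ν f := by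
  unfold dirOf
  have h : ∑ x, ∑ y, ν x * P x y * ((f x - c)*t - (f y - c)*t)^2
      = t^2 * ∑ x, ∑ y, ν x * P x y * (f x - f y)^2 := by
    rw [Finset.mul_sum]
    refine Finset.sum_congr rfl fun x _ => ?_
    rw [Finset.mul_sum]
    exact Finset.sum_congr rfl fun y _ => by ring
  rw [h]; ring

lemma dirOf_one_sub (P : Matrix n n ℝ) (ν : n → ℝ) (f : n → ℝ) :
    dirOf P ν (fun x => 1 - f x) = dirOf P ν f := by
  unfold dirOf
  congr 1
  refine Finset.sum_congr rfl fun x _ => Finset.sum_congr rfl fun y _ => by ring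

variable [DecidableEq n]

lemma edge_bound (P : Matrix n n ℝ) (ν : n → ℝ) (hP : ∀ x y, 0 ≤ P x y)
    (hν : ∀ x, 0 ≤ ν x) (x z : n) (f : n → ℝ) :
    (1/2) * (ν x * P x z * (f x - f z)^2) ≤ dirOf P ν f := by
  unfold dirOf
  have h1 : ν x * P x z * (f x - f z)^2 ≤ ∑ y, ν x * P x y * (f x - f y)^2 :=
    Finset.single_le_sum (f := fun y => ν x * P x y * (f x - f y)^2)
      (fun y _ => mul_nonneg (mul_nonneg (hν x) (hP x y)) (sq_nonneg _))
      (Finset.mem_univ z)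
  have h2 : ∑ y, ν x * P x y * (f x - f y)^2
      ≤ ∑ x', ∑ y, ν x' * P x' y * (f x' - f y)^2 :=
    Finset.single_le_sum (f := fun x' => ∑ y, ν x' * P x' y * (f x' - f y)^2)
      (fun x' _ => Finset.sum_nonneg fun y _ =>
        mul_nonneg (mul_nonneg (hν x') (hP x' y)) (sq_nonneg _))
      (Finset.mem_univ x)
  linarith

lemma pow_entry_nonneg (P : Matrix n n ℝ) (hP : ∀ x y, 0 ≤ P x y) :
    ∀ (k : ℕ) (x y : n), 0 ≤ (P ^ k) x y := by
  intro k
  induction k with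
  | zero => intro x y; rw [pow_zero]; by_cases h : x = y <;> simp [Matrix.one_apply, h]
  | succ k ih =>
    intro x y
    rw [pow_succ, Matrix.mul_apply]
    exact Finset.sum_nonneg fun z _ => mul_nonneg (ih x z) (hP z y)

lemma pathBound (P : Matrix n n ℝ) (ν : n → ℝ) (hP : ∀ x y, 0 ≤ P x y)
    (hν : ∀ x, 0 < ν x) :
    ∀ (k : ℕ) (x y : n), 0 < (P ^ k) x y →
      ∃ C : ℝ, 0 ≤ C ∧ ∀ f : n → ℝ, (f x - f y)^2 ≤ C * dirOf P ν f := by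
  intro k
  induction k with
  | zero =>
    intro x y h
    have hxy : x = y := by
      by_contra hne
      rw [pow_zero, Matrix.one_apply_ne hne] at h
      exact lt_irrefl 0 h
    exact ⟨0, le_refl 0, fun f => by simp [hxy]⟩
  | succ k ih =>
    intro x y h
    rw [pow_succ', Matrix.mul_apply] at h
    obtain ⟨z, -, hz⟩ : ∃ z ∈ Finset.univ, 0 < P x z * (P ^ k) z y := by
      by_contra hc
      push_neg at hc
      have hle : ∑ z, P x z * (P ^ k) z y ≤ 0 := Finset.sum_nonpos fun z hzz => hc z hzz
      linarith
    have ha : 0 < P x z := by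
      rcases (hP x z).lt_or_eq with h' | h'
      · exact h'
      · rw [← h'] at hz; simp at hz
    have hb : 0 < (P ^ k) z y := by
      rcases (pow_entry_nonneg P hP k z y).lt_or_eq with h' | h'
      · exact h'
      · rw [← h'] at hz; simp at hz
    obtain ⟨C, hC0, hC⟩ := ih z y hb
    have hw : 0 < ν x * P x z := mul_pos (hν x) ha
    refine ⟨4/(ν x * P x z) + 2*C, by positivity, fun f => ?_⟩
    have h1 := edge_bound P ν hP (fun x => (hν x).le) x z f
    have h2 := hC f
    have h1' : (f x - f z)^2 ≤ (2/(ν x * P x z)) * dirOf P ν f := by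
      rw [div_mul_eq_mul_div, le_div_iff₀ hw]
      nlinarith
    have h3 : (f x - f y)^2 ≤ 2*(f x - f z)^2 + 2*(f z - f y)^2 := by
      nlinarith [sq_nonneg ((f x - f z) - (f z - f y))]
    have h4 : (4/(ν x * P x z)) * dirOf P ν f = 2 * ((2/(ν x * P x z)) * dirOf P ν f) := by
      ring
    nlinarith

lemma gapOf_bddBelow (P : Matrix n n ℝ) (ν : n → ℝ) (hP : ∀ x y, 0 ≤ P x y)
    (hν : ∀ x, 0 ≤ ν x) :
    ∀ r ∈ {r : ℝ | ∃ f : n → ℝ, varOf ν f ≠ 0 ∧ r = dirOf P ν f / varOf ν f}, (0:ℝ) ≤ r := by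
  rintro r ⟨f, hf, rfl⟩
  exact div_nonneg (dirOf_nonneg P ν hP hν f) (varOf_nonneg ν hν f)

lemma gapOf_le (P : Matrix n n ℝ) (ν : n → ℝ) (hP : ∀ x y, 0 ≤ P x y)
    (hν : ∀ x, 0 ≤ ν x) (f : n → ℝ) (hf : varOf ν f ≠ 0) :
    gapOf P ν ≤ dirOf P ν f / varOf ν f :=
  csInf_le ⟨0, gapOf_bddBelow P ν hP hν⟩ ⟨f, hf, rfl⟩

lemma gapOf_pos (P : Matrix n n ℝ) (ν : n → ℝ) (hP : ∀ x y, 0 ≤ P x y)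
    (hν : ∀ x, 0 < ν x) (hν1 : ∑ x, ν x = 1) (hirr : Irred P)
    (f₀ : n → ℝ) (hf₀ : varOf ν f₀ ≠ 0) : 0 < gapOf P ν := by
  have hex : ∀ x y : n, ∃ C : ℝ, 0 ≤ C ∧ ∀ f : n → ℝ, (f x - f y)^2 ≤ C * dirOf P ν f := by
    intro x y
    obtain ⟨k, hk⟩ := hirr x y
    exact pathBound P ν hP hν k x y hk
  choose C hC0 hC using hex
  set K : ℝ := (1/2) * (∑ x, ∑ y, ν x * ν y * C x y) + 1 with hK
  have hKpos : 0 < K := by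
    have : (0:ℝ) ≤ ∑ x, ∑ y, ν x * ν y * C x y :=
      Finset.sum_nonneg fun x _ => Finset.sum_nonneg fun y _ =>
        mul_nonneg (mul_nonneg (hν x).le (hν y).le) (hC0 x y)
    rw [hK]; linarith
  have hvar : ∀ f : n → ℝ, varOf ν f ≤ K * dirOf P ν f := by
    intro f
    have hD : 0 ≤ dirOf P ν f := dirOf_nonneg P ν hP (fun x => (hν x).le) f
    rw [var_pair ν hν1 f]
    have h1 : ∑ x, ∑ y, ν x * ν y * (f x - f y)^2
        ≤ ∑ x, ∑ y, ν x * ν y * (C x y * dirOf P ν f) := by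
      refine Finset.sum_le_sum fun x _ => Finset.sum_le_sum fun y _ => ?_
      exact mul_le_mul_of_nonneg_left (hC x y f) (mul_nonneg (hν x).le (hν y).le)
    have h2 : ∑ x, ∑ y, ν x * ν y * (C x y * dirOf P ν f)
        = (∑ x, ∑ y, ν x * ν y * C x y) * dirOf P ν f := by
      rw [Finset.sum_mul]
      refine Finset.sum_congr rfl fun x _ => ?_
      rw [Finset.sum_mul]
      exact Finset.sum_congr rfl fun y _ => by ring
    nlinarith
  refine lt_of_lt_of_le (one_div_pos.2 hKpos) (le_csInf ⟨_, f₀, hf₀, rfl⟩ ?_)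
  rintro r ⟨f, hf, rfl⟩
  have hV : 0 < varOf ν f := (varOf_nonneg ν (fun x => (hν x).le) f).lt_of_ne (Ne.symm hf)
  rw [div_le_div_iff₀ hKpos hV]
  have := hvar f
  linarith

lemma var_le_gap (P : Matrix n n ℝ) (ν : n → ℝ) (hP : ∀ x y, 0 ≤ P x y)
    (hν : ∀ x, 0 ≤ ν x) (hpos : 0 < gapOf P ν) (f : n → ℝ) :
    varOf ν f ≤ (1 / gapOf P ν) * dirOf P ν f := by
  by_cases hf : varOf ν f = 0
  · rw [hf]
    exact mul_nonneg (by positivity) (dirOf_nonneg P ν hP hν f)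
  · have hV : 0 < varOf ν f := (varOf_nonneg ν hν f).lt_of_ne (Ne.symm hf)
    have h := gapOf_le P ν hP hν f hf
    rw [le_div_iff₀ hV] at h
    rw [one_div, inv_mul_eq_div, le_div_iff₀ hpos]
    linarith

lemma exists_var_ne (ν : n → ℝ) (hν : ∀ x, 0 < ν x) (x₀ x₁ : n) (hne : x₀ ≠ x₁) :
    varOf ν (fun x => if x = x₀ then (1:ℝ) else 0) ≠ 0 := by
  intro h0
  set f : n → ℝ := fun x => if x = x₀ then (1:ℝ) else 0 with hf
  have hall := (Finset.sum_eq_zero_iff_of_nonneg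
    (fun x _ => mul_nonneg (hν x).le (sq_nonneg (f x - meanOf ν f)))).1 h0
  have h1 : f x₀ = meanOf ν f := by
    have := hall x₀ (Finset.mem_univ x₀)
    have h' : (f x₀ - meanOf ν f)^2 = 0 := by
      rcases mul_eq_zero.1 this with h | h
      · exact absurd h (ne_of_gt (hν x₀))
      · exact h
    have := sq_eq_zero_iff.1 h'
    linarith
  have h2 : f x₁ = meanOf ν f := by
    have := hall x₁ (Finset.mem_univ x₁)
    have h' : (f x₁ - meanOf ν f)^2 = 0 := by
      rcases mul_eq_zero.1 this with h | h
      · exact absurd h (ne_of_gt (hν x₁))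
      · exact h
    have := sq_eq_zero_iff.1 h'
    linarith
  have e1 : f x₀ = 1 := by simp [hf]
  have e2 : f x₁ = 0 := by simp only [hf]; exact if_neg (Ne.symm hne)
  rw [e1] at h1; rw [e2] at h2
  linarith

end Aux

section CapAux

variable {X : Type*} [Fintype X] [DecidableEq X]

lemma capKL_set_lb (p : Matrix X X ℝ) (μ : X → ℝ) (A B : Finset X) (κ l : ℝ)
    (hp : ∀ x y, 0 ≤ p x y) (hμ : ∀ x, 0 ≤ μ x) (hκ : 0 ≤ κ) (hl : 0 ≤ l) :
    ∀ r ∈ {r : ℝ | ∃ f : X → ℝ,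
      r = dirOf p μ f + κ * ∑ a ∈ A, μ a * (f a - 1) ^ 2 + l * ∑ b ∈ B, μ b * f b ^ 2},
      (0:ℝ) ≤ r := by
  rintro r ⟨f, rfl⟩
  have h1 := dirOf_nonneg p μ hp hμ f
  have h2 : (0:ℝ) ≤ ∑ a ∈ A, μ a * (f a - 1)^2 :=
    Finset.sum_nonneg fun a _ => mul_nonneg (hμ a) (sq_nonneg _)
  have h3 : (0:ℝ) ≤ ∑ b ∈ B, μ b * f b ^2 :=
    Finset.sum_nonneg fun b _ => mul_nonneg (hμ b) (sq_nonneg _)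
  positivity

lemma capKL_le (p : Matrix X X ℝ) (μ : X → ℝ) (A B : Finset X) (κ l : ℝ)
    (hp : ∀ x y, 0 ≤ p x y) (hμ : ∀ x, 0 ≤ μ x) (hκ : 0 ≤ κ) (hl : 0 ≤ l) (f : X → ℝ) :
    capKL p μ A B κ l
      ≤ dirOf p μ f + κ * ∑ a ∈ A, μ a * (f a - 1) ^ 2 + l * ∑ b ∈ B, μ b * f b ^ 2 :=
  csInf_le ⟨0, capKL_set_lb p μ A B κ l hp hμ hκ hl⟩ ⟨f, rfl⟩

lemma capKL_symm (p : Matrix X X ℝ) (μ : X → ℝ) (A B : Finset X) (κ l : ℝ) :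
    capKL p μ A B κ l = capKL p μ B A l κ := by
  unfold capKL
  congr 1
  ext r
  simp only [Set.mem_setOf_eq]
  constructor
  · rintro ⟨f, rfl⟩
    refine ⟨fun x => 1 - f x, ?_⟩
    rw [dirOf_one_sub]
    have hA : ∑ a ∈ A, μ a * ((1 - f a))^2 = ∑ a ∈ A, μ a * (f a - 1)^2 :=
      Finset.sum_congr rfl fun a _ => by ring
    have hB : ∑ b ∈ B, μ b * ((1 - f b) - 1)^2 = ∑ b ∈ B, μ b * f b ^2 :=
      Finset.sum_congr rfl fun b _ => by ring
    rw [hA, hB]; ring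
  · rintro ⟨f, rfl⟩
    refine ⟨fun x => 1 - f x, ?_⟩
    rw [dirOf_one_sub]
    have hB : ∑ b ∈ B, μ b * ((1 - f b))^2 = ∑ b ∈ B, μ b * (f b - 1)^2 :=
      Finset.sum_congr rfl fun b _ => by ring
    have hA : ∑ a ∈ A, μ a * ((1 - f a) - 1)^2 = ∑ a ∈ A, μ a * f a ^2 :=
      Finset.sum_congr rfl fun a _ => by ring
    rw [hA, hB]; ring

lemma capKL_pos (p : Matrix X X ℝ) (μ : X → ℝ) (A B : Finset X) (κ l : ℝ)
    (hp : ∀ x y, 0 ≤ p x y) (hμ : ∀ x, 0 < μ x) (hκ : 0 < κ) (hl : 0 < l)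
    (hirr : Irred p) (a : X) (ha : a ∈ A) (b : X) (hb : b ∈ B) :
    0 < capKL p μ A B κ l := by
  obtain ⟨k, hk⟩ := hirr a b
  obtain ⟨C, hC0, hC⟩ := pathBound p μ hp hμ k a b hk
  set δ : ℝ := min (min (κ * μ a) (l * μ b)) (1/(C+1)) / 3 with hδ
  have hδpos : 0 < δ := by
    have h1 : 0 < κ * μ a := mul_pos hκ (hμ a)
    have h2 : 0 < l * μ b := mul_pos hl (hμ b)
    have h3 : (0:ℝ) < 1/(C+1) := by positivity
    have : 0 < min (min (κ * μ a) (l * μ b)) (1/(C+1)) := lt_min (lt_min h1 h2) h3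
    positivity
  refine lt_of_lt_of_le hδpos (le_csInf ⟨_, (fun _ => 0), rfl⟩ ?_)
  rintro r ⟨f, rfl⟩
  have hD : 0 ≤ dirOf p μ f := dirOf_nonneg p μ hp (fun x => (hμ x).le) f
  have hfa : κ * (μ a * (f a - 1)^2) ≤ κ * ∑ a' ∈ A, μ a' * (f a' - 1)^2 := by
    refine mul_le_mul_of_nonneg_left ?_ hκ.le
    exact Finset.single_le_sum (f := fun a' => μ a' * (f a' - 1)^2)
      (fun a' _ => mul_nonneg (hμ a').le (sq_nonneg _)) ha
  have hfb : l * (μ b * f b ^2) ≤ l * ∑ b' ∈ B, μ b' * f b' ^2 := by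
    refine mul_le_mul_of_nonneg_left ?_ hl.le
    exact Finset.single_le_sum (f := fun b' => μ b' * f b' ^2)
      (fun b' _ => mul_nonneg (hμ b').le (sq_nonneg _)) hb
  have hpath : (f a - f b)^2 ≤ (C+1) * dirOf p μ f := by
    have := hC f
    nlinarith
  have hDlb : (1/(C+1)) * (f a - f b)^2 ≤ dirOf p μ f := by
    rw [div_mul_eq_mul_div, div_le_iff₀ (by positivity : (0:ℝ) < C+1)]
    nlinarith
  have hsum : (1:ℝ) ≤ 3 * ((f a - 1)^2 + (f a - f b)^2 + f b ^2) := by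
    nlinarith [sq_nonneg ((1 - f a) + (f a - f b) + f b), sq_nonneg ((1 - f a) - (f a - f b)),
      sq_nonneg ((f a - f b) - f b), sq_nonneg ((1 - f a) - f b)]
  set δ₀ : ℝ := min (min (κ * μ a) (l * μ b)) (1/(C+1)) with hδ₀
  have hδ₀a : δ₀ ≤ κ * μ a := le_trans (min_le_left _ _) (min_le_left _ _)
  have hδ₀b : δ₀ ≤ l * μ b := le_trans (min_le_left _ _) (min_le_right _ _)
  have hδ₀c : δ₀ ≤ 1/(C+1) := min_le_right _ _
  have t1 : δ₀ * (f a - 1)^2 ≤ κ * (μ a * (f a - 1)^2) := by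
    rw [← mul_assoc]; exact mul_le_mul_of_nonneg_right hδ₀a (sq_nonneg _)
  have t2 : δ₀ * f b ^2 ≤ l * (μ b * f b ^2) := by
    rw [← mul_assoc]; exact mul_le_mul_of_nonneg_right hδ₀b (sq_nonneg _)
  have t3 : δ₀ * (f a - f b)^2 ≤ dirOf p μ f := by
    refine le_trans ?_ hDlb
    exact mul_le_mul_of_nonneg_right hδ₀c (sq_nonneg _)
  have hδ3 : δ = δ₀ / 3 := rfl
  have hδ₀pos : 0 < δ₀ :=
    lt_min (lt_min (mul_pos hκ (hμ a)) (mul_pos hl (hμ b))) (by positivity)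
  have hs2 : δ₀ ≤ 3*δ₀*((f a - 1)^2 + (f a - f b)^2 + f b ^2) := by nlinarith
  linarith

end CapAux
/-- Lemma 2.11: Poincaré inequality for a partition of `X` into `m` pieces. -/
theorem poincare_partition
    (X : Type*) [Fintype X] [DecidableEq X]
    (p : Matrix X X ℝ) (μ : X → ℝ)
    (hp_nonneg : ∀ x y, 0 ≤ p x y)
    (hp_row : ∀ x, ∑ y, p x y = 1)
    (hp_irr : Irred p)
    (hμ_pos : ∀ x, 0 < μ x)
    (hμ_sum : ∑ x, μ x = 1)
    (hrev : ∀ x y, μ x * p x y = μ y * p y x)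
    (m : ℕ) (hm : 2 ≤ m)
    (Rv : Fin m → Finset X)
    (h_ne : ∀ i, (Rv i).Nonempty)
    (h_two : ∀ i, 2 ≤ (Rv i).card)
    (h_disj : ∀ i j, i ≠ j → Disjoint (Rv i) (Rv j))
    (h_cover : ∀ x : X, ∃ i, x ∈ Rv i)
    (h_irr : ∀ i, Irred (pRefl p (Rv i)))
    (κv : Fin m → ℝ) (hκv : ∀ i, 0 < κv i) :
    1 / gapOf p μ ≤
      (1 / 2) * (∑ i : Fin m, ∑ j ∈ Finset.univ.erase i,
          1 / (capKL p μ (Rv i) (Rv j) (κv i) (κv j) /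
                ((∑ y ∈ Rv i, μ y) * ∑ y ∈ Rv j, μ y)))
        + sSup {r : ℝ | ∃ i : Fin m,
            r = (1 / gapR p μ (Rv i)) *
              (1 + ∑ j ∈ Finset.univ.erase i,
                κv i / (capKL p μ (Rv i) (Rv j) (κv i) (κv j) /
                          ((∑ y ∈ Rv i, μ y) * ∑ y ∈ Rv j, μ y)))} := by
  classical
  set w : Fin m → ℝ := fun i => ∑ y ∈ Rv i, μ y with hw_def
  have hw : ∀ i, 0 < w i := fun i => Finset.sum_pos (fun x _ => hμ_pos x) (h_ne i)
  have hwi : ∀ i, w i = ∑ x ∈ Rv i, μ x := fun i => rfl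
  -- partition of sums
  have huniv : (Finset.univ : Finset X) = Finset.univ.biUnion Rv := by
    ext x
    simp only [Finset.mem_univ, Finset.mem_biUnion, true_iff]
    obtain ⟨i, hi⟩ := h_cover x
    exact ⟨i, trivial, hi⟩
  have hpart : ∀ t : X → ℝ, ∑ x, t x = ∑ i, ∑ x ∈ Rv i, t x := by
    intro t
    rw [huniv, Finset.sum_biUnion (fun i _ j _ hij => h_disj i j hij)]
  -- capacities
  set Cm : Fin m → Fin m → ℝ :=
    fun i j => capKL p μ (Rv i) (Rv j) (κv i) (κv j) with hCm_def
  have hCpos : ∀ i j, 0 < Cm i j := by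
    intro i j
    obtain ⟨a, ha⟩ := h_ne i
    obtain ⟨b, hb⟩ := h_ne j
    exact capKL_pos p μ _ _ _ _ hp_nonneg hμ_pos (hκv i) (hκv j) hp_irr a ha b hb
  have hCsymm : ∀ i j, Cm i j = Cm j i := fun i j => capKL_symm p μ _ _ _ _
  have hCm2 : ∀ i j, Cm i j = capKL p μ (Rv i) (Rv j) (κv i) (κv j) := fun i j => rfl
  set φinv : Fin m → Fin m → ℝ := fun i j => 1 / (Cm i j / (w i * w j)) with hφ_def
  have hφeq : ∀ i j, φinv i j = (w i * w j) / Cm i j := fun i j => one_div_div _ _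
  have hφpos : ∀ i j, 0 < φinv i j := by
    intro i j
    rw [hφeq]
    exact div_pos (mul_pos (hw i) (hw j)) (hCpos i j)
  have hφsymm : ∀ i j, φinv i j = φinv j i := by
    intro i j
    rw [hφeq, hφeq, hCsymm, mul_comm]
  set sK : Fin m → ℝ :=
    fun i => ∑ j ∈ Finset.univ.erase i, κv i / (Cm i j / (w i * w j)) with hsK_def
  have hsK_eq : ∀ i, sK i = ∑ j ∈ Finset.univ.erase i, κv i * φinv i j := by
    intro i
    rw [hsK_def]
    refine Finset.sum_congr rfl fun j _ => ?_
    rw [hφ_def, div_eq_mul_one_div]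
  have hsK0 : ∀ i, 0 ≤ sK i := by
    intro i
    rw [hsK_eq]
    exact Finset.sum_nonneg fun j _ => mul_nonneg (hκv i).le (hφpos i j).le
  -- reflected kernels
  have hrefl_nonneg : ∀ i (x y : Rv i), 0 ≤ pRefl p (Rv i) x y := by
    intro i x y
    unfold pRefl escR
    by_cases h : (x:X) = (y:X)
    · rw [if_pos h]
      have h1 : (0:ℝ) ≤ ∑ z ∈ (Rv i)ᶜ, p x z :=
        Finset.sum_nonneg fun z _ => hp_nonneg x z
      have h2 := hp_nonneg (x:X) (x:X)
      linarith
    · rw [if_neg h]; exact hp_nonneg x y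
  have hν_pos : ∀ i (x : Rv i), 0 < muR μ (Rv i) x :=
    fun i x => div_pos (hμ_pos x) (hw i)
  have hν_sum : ∀ i, ∑ x : Rv i, muR μ (Rv i) x = 1 := by
    intro i
    rw [Finset.sum_coe_sort (Rv i) (fun x => muR μ (Rv i) x)]
    unfold muR
    rw [← Finset.sum_div]
    exact div_self (ne_of_gt (hw i))
  have hgapR_pos : ∀ i, 0 < gapOf (pRefl p (Rv i)) (fun x : Rv i => muR μ (Rv i) x) := by
    intro i
    obtain ⟨x₀, hx₀, x₁, hx₁, hx01⟩ := Finset.one_lt_card.1 (h_two i)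
    have hne : (⟨x₀, hx₀⟩ : Rv i) ≠ ⟨x₁, hx₁⟩ := by
      simp only [ne_eq, Subtype.mk.injEq]; exact hx01
    exact gapOf_pos _ _ (hrefl_nonneg i) (hν_pos i) (hν_sum i) (h_irr i) _
      (exists_var_ne _ (hν_pos i) ⟨x₀, hx₀⟩ ⟨x₁, hx₁⟩ hne)
  have hgapR_eq : ∀ i, gapR p μ (Rv i)
      = gapOf (pRefl p (Rv i)) (fun x : Rv i => muR μ (Rv i) x) := fun i => rfl
  -- the sSup part
  set M : ℝ := sSup {r : ℝ | ∃ i : Fin m, r = (1 / gapR p μ (Rv i)) * (1 + sK i)}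
    with hM_def
  have hMbdd : BddAbove {r : ℝ | ∃ i : Fin m, r = (1 / gapR p μ (Rv i)) * (1 + sK i)} := by
    have hs : {r : ℝ | ∃ i : Fin m, r = (1 / gapR p μ (Rv i)) * (1 + sK i)}
        = Set.range (fun i : Fin m => (1 / gapR p μ (Rv i)) * (1 + sK i)) := by
      ext r; simp [eq_comm]
    rw [hs]
    exact (Set.finite_range _).bddAbove
  have hgapM : ∀ i, (1 / gapR p μ (Rv i)) * (1 + sK i) ≤ M :=
    fun i => le_csSup hMbdd ⟨i, rfl⟩
  have hM0 : 0 ≤ M := by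
    have i0 : Fin m := ⟨0, by omega⟩
    refine le_trans ?_ (hgapM i0)
    have h1 : 0 < gapR p μ (Rv i0) := by rw [hgapR_eq]; exact hgapR_pos i0
    have h2 := hsK0 i0
    positivity
  set S : ℝ := (1/2) * (∑ i : Fin m, ∑ j ∈ Finset.univ.erase i, φinv i j) with hS_def
  -- KEY CLAIM
  have key : ∀ f : X → ℝ, varOf μ f ≤ (S + M) * dirOf p μ f := by
    intro f
    have hD0 : 0 ≤ dirOf p μ f := dirOf_nonneg p μ hp_nonneg (fun x => (hμ_pos x).le) f
    set E : Fin m → ℝ := fun i => (∑ x ∈ Rv i, μ x * f x) / w i with hE_def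
    set V : Fin m → ℝ := fun i => ∑ x ∈ Rv i, μ x * (f x - E i)^2 with hV_def
    have hE2 : ∀ i, E i = (∑ x ∈ Rv i, μ x * f x) / w i := fun i => rfl
    have hV2 : ∀ i, V i = ∑ x ∈ Rv i, μ x * (f x - E i)^2 := fun i => rfl
    have hV0 : ∀ i, 0 ≤ V i := fun i =>
      Finset.sum_nonneg fun x _ => mul_nonneg (hμ_pos x).le (sq_nonneg _)
    have hb0 : ∀ i, ∑ x ∈ Rv i, μ x * (f x - E i) = 0 := by
      intro i
      have h : ∀ x ∈ Rv i, μ x * (f x - E i) = μ x * f x - E i * μ x := fun x _ => by ring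
      rw [Finset.sum_congr rfl h, Finset.sum_sub_distrib, ← Finset.mul_sum, hE2 i]
      rw [← hwi i, div_mul_cancel₀ _ (ne_of_gt (hw i))]
      exact sub_self _
    have hmean : meanOf μ f = ∑ i, w i * E i := by
      unfold meanOf
      rw [hpart (fun x => μ x * f x)]
      refine Finset.sum_congr rfl fun i _ => ?_
      rw [hE2 i]
      field_simp
      rw [mul_div_cancel_right₀ _ (ne_of_gt (hw i))]
    have hdecomp : varOf μ f = (∑ i, V i) + ∑ i, w i * (E i - meanOf μ f)^2 := by
      unfold varOf
      rw [hpart (fun x => μ x * (f x - meanOf μ f)^2), ← Finset.sum_add_distrib]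
      refine Finset.sum_congr rfl fun i _ => ?_
      have hsplit : ∀ x ∈ Rv i, μ x * (f x - meanOf μ f)^2
          = μ x * (f x - E i)^2 + (2*(E i - meanOf μ f)) * (μ x * (f x - E i))
            + (E i - meanOf μ f)^2 * μ x := fun x _ => by ring
      rw [Finset.sum_congr rfl hsplit, Finset.sum_add_distrib, Finset.sum_add_distrib,
        ← Finset.mul_sum, hb0 i, ← Finset.mul_sum, ← hwi i]
      rw [hV2 i]
      ring
    have hw1 : ∑ i, w i = 1 := by rw [← hpart μ]; exact hμ_sum
    have hvarE : ∑ i, w i * (E i - meanOf μ f)^2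
        = (1/2) * ∑ i, ∑ j, w i * w j * (E i - E j)^2 := by
      have hmE : meanOf w E = meanOf μ f := hmean.symm
      have h := var_pair w hw1 E
      unfold varOf at h
      rw [hmE] at h
      exact h
    have hdiag : ∀ i : Fin m, ∑ j, w i * w j * (E i - E j)^2
        = ∑ j ∈ Finset.univ.erase i, w i * w j * (E i - E j)^2 := by
      intro i
      rw [← Finset.sum_erase_add Finset.univ _ (Finset.mem_univ i)]
      simp
    -- capacity bound on mean differences
    have hcap : ∀ i j, Cm i j * (E i - E j)^2
        ≤ dirOf p μ f + κv i * V i + κv j * V j := by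
      intro i j
      by_cases hEe : E i = E j
      · rw [hEe, sub_self]
        have h1 : 0 ≤ κv i * V i := mul_nonneg (hκv i).le (hV0 i)
        have h2 : 0 ≤ κv j * V j := mul_nonneg (hκv j).le (hV0 j)
        have h3 : Cm i j * (0:ℝ)^2 = 0 := by ring
        rw [h3]
        linarith
      · set Δ : ℝ := E i - E j with hΔ_def
        have hΔne : Δ ≠ 0 := sub_ne_zero.2 hEe
        have hle := capKL_le p μ (Rv i) (Rv j) (κv i) (κv j) hp_nonneg
          (fun x => (hμ_pos x).le) (hκv i).le (hκv j).le (fun x => (f x - E j) * Δ⁻¹)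
        have h1 : dirOf p μ (fun x => (f x - E j) * Δ⁻¹) = Δ⁻¹^2 * dirOf p μ f :=
          dirOf_affine p μ f (E j) Δ⁻¹
        have h2 : ∑ a ∈ Rv i, μ a * ((f a - E j) * Δ⁻¹ - 1)^2 = Δ⁻¹^2 * V i := by
          rw [hV2 i, Finset.mul_sum]
          refine Finset.sum_congr rfl fun a _ => ?_
          have hx : (f a - E j) * Δ⁻¹ - 1 = (f a - E i) * Δ⁻¹ := by
            rw [hΔ_def]
            field_simp; ring
          rw [hx]
          ring
        have h3 : ∑ b ∈ Rv j, μ b * ((f b - E j) * Δ⁻¹)^2 = Δ⁻¹^2 * V j := by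
          rw [hV2 j, Finset.mul_sum]
          refine Finset.sum_congr rfl fun b _ => ?_
          ring
        rw [h1, h2, h3] at hle
        have hCmle : Cm i j ≤ Δ⁻¹^2 * (dirOf p μ f + κv i * V i + κv j * V j) := by
          rw [hCm2 i j]
          refine le_trans hle (le_of_eq ?_)
          ring
        have hΔ2 : (0:ℝ) < Δ^2 := by positivity
        have hinv : Δ⁻¹^2 * Δ^2 = 1 := by field_simp
        calc Cm i j * (E i - E j)^2 = Cm i j * Δ^2 := by rw [hΔ_def]
          _ ≤ (Δ⁻¹^2 * (dirOf p μ f + κv i * V i + κv j * V j)) * Δ^2 :=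
              mul_le_mul_of_nonneg_right hCmle hΔ2.le
          _ = (Δ⁻¹^2 * Δ^2) * (dirOf p μ f + κv i * V i + κv j * V j) := by ring
          _ = dirOf p μ f + κv i * V i + κv j * V j := by rw [hinv, one_mul]
    have hww : ∀ i j, w i * w j * (E i - E j)^2
        ≤ φinv i j * (dirOf p μ f + κv i * V i + κv j * V j) := by
      intro i j
      rw [hφeq, div_mul_eq_mul_div, le_div_iff₀ (hCpos i j)]
      calc w i * w j * (E i - E j)^2 * Cm i j
          = (w i * w j) * (Cm i j * (E i - E j)^2) := by ring
        _ ≤ (w i * w j) * (dirOf p μ f + κv i * V i + κv j * V j) :=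
            mul_le_mul_of_nonneg_left (hcap i j) (mul_pos (hw i) (hw j)).le
    -- assemble
    have hstep1 : varOf μ f ≤ (∑ i, V i)
        + (1/2) * ∑ i, ∑ j ∈ Finset.univ.erase i,
            φinv i j * (dirOf p μ f + κv i * V i + κv j * V j) := by
      rw [hdecomp, hvarE]
      have h2 : ∑ i, ∑ j, w i * w j * (E i - E j)^2
          ≤ ∑ i, ∑ j ∈ Finset.univ.erase i,
              φinv i j * (dirOf p μ f + κv i * V i + κv j * V j) := by
        refine Finset.sum_le_sum fun i _ => ?_
        rw [hdiag i]
        exact Finset.sum_le_sum fun j _ => hww i j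
      linarith
    have hexpand : ∑ i, ∑ j ∈ Finset.univ.erase i,
          φinv i j * (dirOf p μ f + κv i * V i + κv j * V j)
        = (∑ i, ∑ j ∈ Finset.univ.erase i, φinv i j) * dirOf p μ f
          + ((∑ i, ∑ j ∈ Finset.univ.erase i, φinv i j * (κv i * V i))
          + (∑ i, ∑ j ∈ Finset.univ.erase i, φinv i j * (κv j * V j))) := by
      rw [Finset.sum_mul, ← Finset.sum_add_distrib, ← Finset.sum_add_distrib]
      refine Finset.sum_congr rfl fun i _ => ?_
      rw [Finset.sum_mul, ← Finset.sum_add_distrib, ← Finset.sum_add_distrib]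
      exact Finset.sum_congr rfl fun j _ => by ring
    have hswap : (∑ i, ∑ j ∈ Finset.univ.erase i, φinv i j * (κv j * V j))
        = ∑ i, ∑ j ∈ Finset.univ.erase i, φinv i j * (κv i * V i) := by
      rw [Finset.sum_comm' (s := Finset.univ) (t := fun i => Finset.univ.erase i)
        (t' := Finset.univ) (s' := fun j => Finset.univ.erase j)
        (fun x y => by simp [Finset.mem_erase]; exact ne_comm)]
      exact Finset.sum_congr rfl fun j _ => Finset.sum_congr rfl fun i _ => by
        rw [hφsymm]
    have hsKV : ∀ i, ∑ j ∈ Finset.univ.erase i, φinv i j * (κv i * V i) = sK i * V i := by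
      intro i
      rw [hsK_eq, Finset.sum_mul]
      exact Finset.sum_congr rfl fun j _ => by ring
    have hstep2 : varOf μ f ≤ S * dirOf p μ f + ∑ i, (1 + sK i) * V i := by
      have e1 : ∑ i, ∑ j ∈ Finset.univ.erase i, φinv i j * (κv i * V i)
          = ∑ i, sK i * V i := Finset.sum_congr rfl fun i _ => hsKV i
      have e2 : ∑ i, (1 + sK i) * V i = (∑ i, V i) + ∑ i, sK i * V i := by
        rw [← Finset.sum_add_distrib]
        exact Finset.sum_congr rfl fun i _ => by ring
      have h := hstep1
      rw [hexpand, hswap, e1] at h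
      rw [hS_def, e2]
      linarith
    -- block bounds
    have hblock : ∀ i, V i ≤ (1 / gapR p μ (Rv i))
        * ((1/2) * ∑ x ∈ Rv i, ∑ y ∈ Rv i, μ x * p x y * (f x - f y)^2) := by
      intro i
      rw [hgapR_eq i]
      have hv := var_le_gap (pRefl p (Rv i)) (fun x : Rv i => muR μ (Rv i) x)
        (hrefl_nonneg i) (fun x => (hν_pos i x).le) (hgapR_pos i) (fun x : Rv i => f x)
      have hmean_i : meanOf (fun x : Rv i => muR μ (Rv i) x) (fun x : Rv i => f x)
          = E i := by
        unfold meanOf muR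
        rw [Finset.sum_coe_sort (Rv i) (fun x => μ x / (∑ y ∈ Rv i, μ y) * f x)]
        have h : ∀ x ∈ Rv i, μ x / (∑ y ∈ Rv i, μ y) * f x
            = (μ x * f x) / (∑ y ∈ Rv i, μ y) := fun x _ => by ring
        rw [Finset.sum_congr rfl h, ← Finset.sum_div, hE2 i, hwi i]
      have hvar_i : varOf (fun x : Rv i => muR μ (Rv i) x) (fun x : Rv i => f x)
          = V i / w i := by
        unfold varOf
        rw [hmean_i]
        rw [Finset.sum_coe_sort (Rv i) (fun x => muR μ (Rv i) x * (f x - E i)^2)]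
        rw [hV2 i, Finset.sum_div]
        refine Finset.sum_congr rfl fun x _ => ?_
        unfold muR
        rw [← hwi i]
        ring
      have hdir_i : dirOf (pRefl p (Rv i)) (fun x : Rv i => muR μ (Rv i) x)
            (fun x : Rv i => f x)
          = ((1/2) * ∑ x ∈ Rv i, ∑ y ∈ Rv i, μ x * p x y * (f x - f y)^2) / w i := by
        unfold dirOf
        have hterm : ∀ x y : Rv i,
            muR μ (Rv i) x * pRefl p (Rv i) x y * ((f x : ℝ) - f y)^2
            = (μ x * p x y * (f x - f y)^2) / w i := by
          intro x y
          by_cases hxy : (x:X) = (y:X)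
          · have hz : f (x:X) - f (y:X) = 0 := by rw [hxy, sub_self]
            rw [hz]
            ring
          · unfold pRefl
            rw [if_neg hxy]
            unfold muR
            rw [← hwi i]
            ring
        have h1 : ∀ x : Rv i,
            ∑ y : Rv i, muR μ (Rv i) x * pRefl p (Rv i) x y * ((f x : ℝ) - f y)^2
            = (∑ y ∈ Rv i, μ x * p x y * (f x - f y)^2) / w i := by
          intro x
          rw [Finset.sum_congr rfl (fun y _ => hterm x y)]
          rw [Finset.sum_coe_sort (Rv i) (fun y => (μ x * p x y * (f x - f y)^2) / w i)]
          rw [← Finset.sum_div]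
        rw [Finset.sum_congr rfl (fun x _ => h1 x)]
        rw [Finset.sum_coe_sort (Rv i)
          (fun x => (∑ y ∈ Rv i, μ x * p x y * (f x - f y)^2) / w i)]
        rw [← Finset.sum_div]
        rw [mul_div_assoc]
      rw [hvar_i, hdir_i, ← mul_div_assoc] at hv
      exact (div_le_div_iff_of_pos_right (hw i)).1 hv
    have hDsplit : ∑ i, (1/2) * ∑ x ∈ Rv i, ∑ y ∈ Rv i, μ x * p x y * (f x - f y)^2
        ≤ dirOf p μ f := by
      unfold dirOf
      rw [hpart (fun x => ∑ y, μ x * p x y * (f x - f y)^2), Finset.mul_sum]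
      refine Finset.sum_le_sum fun i _ => ?_
      refine mul_le_mul_of_nonneg_left ?_ (by norm_num)
      refine Finset.sum_le_sum fun x _ => ?_
      refine Finset.sum_le_sum_of_subset_of_nonneg (Finset.subset_univ _) ?_
      intro y _ _
      exact mul_nonneg (mul_nonneg (hμ_pos x).le (hp_nonneg x y)) (sq_nonneg _)
    have hsum2 : ∑ i, (1 + sK i) * V i ≤ M * dirOf p μ f := by
      have h1 : ∀ i, (1 + sK i) * V i
          ≤ M * ((1/2) * ∑ x ∈ Rv i, ∑ y ∈ Rv i, μ x * p x y * (f x - f y)^2) := by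
        intro i
        have hg : 0 < gapR p μ (Rv i) := by rw [hgapR_eq]; exact hgapR_pos i
        have hDb : 0 ≤ (1/2) * ∑ x ∈ Rv i, ∑ y ∈ Rv i, μ x * p x y * (f x - f y)^2 := by
          refine mul_nonneg (by norm_num) ?_
          refine Finset.sum_nonneg fun x _ => Finset.sum_nonneg fun y _ => ?_
          exact mul_nonneg (mul_nonneg (hμ_pos x).le (hp_nonneg x y)) (sq_nonneg _)
        calc (1 + sK i) * V i
            ≤ (1 + sK i) * ((1 / gapR p μ (Rv i))
              * ((1/2) * ∑ x ∈ Rv i, ∑ y ∈ Rv i, μ x * p x y * (f x - f y)^2)) := by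
              refine mul_le_mul_of_nonneg_left (hblock i) ?_
              have := hsK0 i
              linarith
          _ = ((1 / gapR p μ (Rv i)) * (1 + sK i))
              * ((1/2) * ∑ x ∈ Rv i, ∑ y ∈ Rv i, μ x * p x y * (f x - f y)^2) := by ring
          _ ≤ M * ((1/2) * ∑ x ∈ Rv i, ∑ y ∈ Rv i, μ x * p x y * (f x - f y)^2) :=
              mul_le_mul_of_nonneg_right (hgapM i) hDb
      calc ∑ i, (1 + sK i) * V i
          ≤ ∑ i, M * ((1/2) * ∑ x ∈ Rv i, ∑ y ∈ Rv i, μ x * p x y * (f x - f y)^2) :=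
            Finset.sum_le_sum fun i _ => h1 i
        _ = M * ∑ i, (1/2) * ∑ x ∈ Rv i, ∑ y ∈ Rv i, μ x * p x y * (f x - f y)^2 := by
            rw [Finset.mul_sum]
        _ ≤ M * dirOf p μ f := mul_le_mul_of_nonneg_left hDsplit hM0
    calc varOf μ f ≤ S * dirOf p μ f + ∑ i, (1 + sK i) * V i := hstep2
      _ ≤ S * dirOf p μ f + M * dirOf p μ f := by linarith
      _ = (S + M) * dirOf p μ f := by ring
  -- witness with nonzero variance
  have i0 : Fin m := ⟨0, by omega⟩
  have i1 : Fin m := ⟨1, by omega⟩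
  have hi01 : (⟨0, by omega⟩ : Fin m) ≠ (⟨1, by omega⟩ : Fin m) := by
    simp [Fin.ext_iff]
  obtain ⟨x₀, hx₀⟩ := h_ne ⟨0, by omega⟩
  obtain ⟨x₁, hx₁⟩ := h_ne ⟨1, by omega⟩
  have hx01 : x₀ ≠ x₁ := by
    intro h
    exact (Finset.disjoint_left.1 (h_disj _ _ hi01) hx₀) (h ▸ hx₁)
  have hf₀ : varOf μ (fun x => if x = x₀ then (1:ℝ) else 0) ≠ 0 :=
    exists_var_ne μ hμ_pos x₀ x₁ hx01
  set f₀ : X → ℝ := fun x => if x = x₀ then (1:ℝ) else 0 with hf₀_def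
  have hv0 : 0 < varOf μ f₀ :=
    lt_of_le_of_ne (varOf_nonneg μ (fun x => (hμ_pos x).le) f₀) (Ne.symm hf₀)
  have hD0' : 0 ≤ dirOf p μ f₀ := dirOf_nonneg p μ hp_nonneg (fun x => (hμ_pos x).le) f₀
  have hSM_pos : 0 < S + M := by
    by_contra hc
    push_neg at hc
    nlinarith [key f₀]
  have hgap_ge : 1 / (S + M) ≤ gapOf p μ := by
    refine le_csInf ⟨_, f₀, hf₀, rfl⟩ ?_
    rintro r ⟨f, hf, rfl⟩
    have hV : 0 < varOf μ f :=
      lt_of_le_of_ne (varOf_nonneg μ (fun x => (hμ_pos x).le) f) (Ne.symm hf)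
    rw [div_le_div_iff₀ hSM_pos hV]
    have := key f
    linarith
  have hfin := one_div_le_one_div_of_le (one_div_pos.2 hSM_pos) hgap_ge
  rw [one_div_one_div] at hfin
  refine le_trans hfin (le_of_eq ?_)
  simp only [hS_def, hM_def, hsK_def, hφ_def, hCm_def, hw_def]
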